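/- Let K have characteristic zero and let u, v ∈ ℕ^n. The join of the irreducible monomial ideals m^u = ⟨x_i^{u_i} : u_i > 0⟩ and m^v = ⟨x_i^{v_i} : v_i > 0⟩ is the irreducible monomial ideal m^w where w_i = u_i + v_i - 1 if both u_i > 0 and v_i > 0, and w_i = 0 otherwise. -/

import Mathlib

open MvPolynomial

/-- The join `I * J` of two ideals in `K[x_1,...,x_n]`: the elimination ideal
`(I(y) + J(z) + ⟨y_i + z_i - x_i⟩) ∩ K[x]`, realized in the polynomial ring on
`Fin n ⊕ (Fin n ⊕ Fin n)` where `Sum.inl` are the `x`-variables, `Sum.inr ∘ Sum.inl`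
the `y`-variables and `Sum.inr ∘ Sum.inr` the `z`-variables. -/
noncomputable def joinIdeal {K : Type*} [Field K] {n : ℕ}
    (I J : Ideal (MvPolynomial (Fin n) K)) : Ideal (MvPolynomial (Fin n) K) :=
  Ideal.comap (rename (Sum.inl : Fin n → Fin n ⊕ (Fin n ⊕ Fin n)))
    (Ideal.map (rename (fun i : Fin n => (Sum.inr (Sum.inl i) : Fin n ⊕ (Fin n ⊕ Fin n)))) I ⊔
     Ideal.map (rename (fun i : Fin n => (Sum.inr (Sum.inr i) : Fin n ⊕ (Fin n ⊕ Fin n)))) J ⊔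
     Ideal.span {p : MvPolynomial (Fin n ⊕ (Fin n ⊕ Fin n)) K | ∃ i : Fin n,
       p = X (Sum.inr (Sum.inl i)) + X (Sum.inr (Sum.inr i)) - X (Sum.inl i)})

/-- The `r`-th secant ideal `I^{r}`, the `r`-fold join of `I` with itself.
(The `0`-th secant is the irrelevant maximal ideal `⟨x_1,...,x_n⟩`, the identity for join.) -/
noncomputable def secantIdeal {K : Type*} [Field K] {n : ℕ}
    (I : Ideal (MvPolynomial (Fin n) K)) : ℕ → Ideal (MvPolynomial (Fin n) K)
  | 0 => Ideal.span (Set.range X)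
  | 1 => I
  | (r + 2) => joinIdeal (secantIdeal I (r + 1)) I

/-- The irreducible monomial ideal `m^u = ⟨x_i^{u_i} : u_i > 0⟩`. -/
noncomputable def irredMonomialIdeal (K : Type*) [Field K] {n : ℕ} (u : Fin n → ℕ) :
    Ideal (MvPolynomial (Fin n) K) :=
  Ideal.span {p : MvPolynomial (Fin n) K | ∃ i : Fin n, 0 < u i ∧ p = X i ^ u i}


namespace JoinProofAux


variable {K : Type*} [Field K] {n : ℕ}

/-- Index type: `inl` = x-variables, `inr∘inl` = y, `inr∘inr` = z. -/
abbrev Idx (n : ℕ) := Fin n ⊕ (Fin n ⊕ Fin n)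

def Y (i : Fin n) : Idx n := Sum.inr (Sum.inl i)
def Z (i : Fin n) : Idx n := Sum.inr (Sum.inr i)

lemma Y_inj : Function.Injective (Y (n := n)) := fun a b h => by
  simpa [Y] using h
lemma Z_inj : Function.Injective (Z (n := n)) := fun a b h => by
  simpa [Z] using h
lemma Y_ne_Z (i j : Fin n) : Y i ≠ Z j := by simp [Y, Z]
lemma Y_ne_inl (i j : Fin n) : Y i ≠ Sum.inl j := by simp [Y]
lemma Z_ne_inl (i j : Fin n) : Z i ≠ Sum.inl j := by simp [Z]

@[simp] lemma Y_eq_Y {i j : Fin n} : Y i = Y j ↔ i = j := by simp [Y]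
@[simp] lemma Z_eq_Z {i j : Fin n} : Z i = Z j ↔ i = j := by simp [Z]
@[simp] lemma Y_eq_Z' {i j : Fin n} : ¬ (Y i = Z j) := Y_ne_Z i j
@[simp] lemma Z_eq_Y' {i j : Fin n} : ¬ (Z i = Y j) := Ne.symm (Y_ne_Z j i)

lemma binom_expand (j k : Idx n) (N : ℕ) :
    ((X j + X k : MvPolynomial (Idx n) K) ^ N) =
      ∑ m ∈ Finset.range (N+1),
        monomial (Finsupp.single j m + Finsupp.single k (N - m)) ((N.choose m : K)) := by
  rw [add_pow]
  refine Finset.sum_congr rfl fun m hm => ?_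
  rw [X_pow_eq_monomial, X_pow_eq_monomial, monomial_mul, one_mul,
    ← map_natCast (C : K →+* MvPolynomial (Idx n) K) (N.choose m), mul_comm, C_mul_monomial,
    mul_one]

lemma coeff_binom_pow {j k : Idx n} (hjk : j ≠ k) (a b : ℕ) :
    coeff (Finsupp.single j a + Finsupp.single k b)
      ((X j + X k : MvPolynomial (Idx n) K) ^ (a + b)) = ((a+b).choose a : K) := by
  rw [binom_expand, coeff_sum]
  rw [Finset.sum_eq_single a]
  · have h1 : a + b - a = b := by omega
    rw [h1, coeff_monomial, if_pos rfl]
  · intro m hm hma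
    rw [coeff_monomial, if_neg]
    intro h
    apply hma
    have := DFunLike.congr_fun h j
    simpa [Finsupp.single_apply, hjk.symm, Ne.symm hjk] using this
  · intro h
    exact absurd (Finset.mem_range.2 (by omega)) h

lemma supp_binom_pow {j k : Idx n} (N : ℕ) {d : Idx n →₀ ℕ}
    (hd : coeff d ((X j + X k : MvPolynomial (Idx n) K) ^ N) ≠ 0) :
    ∃ p q, p + q = N ∧ d = Finsupp.single j p + Finsupp.single k q := by
  rw [binom_expand, coeff_sum] at hd
  obtain ⟨m, hm, hne⟩ := Finset.exists_ne_zero_of_sum_ne_zero hd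
  rw [coeff_monomial] at hne
  refine ⟨m, N - m, ?_, ?_⟩
  · simp only [Finset.mem_range] at hm; omega
  · by_contra h
    exact hne (if_neg (fun he => h he.symm))


lemma Dsum_apply_Y (s : Finset (Fin n)) (a b : Fin n → ℕ) (j : Fin n) :
    (∑ i ∈ s, (Finsupp.single (Y i) (a i) + Finsupp.single (Z i) (b i))) (Y j)
      = if j ∈ s then a j else 0 := by
  classical
  rw [Finsupp.finset_sum_apply]
  rw [show (∑ i ∈ s, ((Finsupp.single (Y i) (a i) + Finsupp.single (Z i) (b i)) (Y j)))
      = ∑ i ∈ s, (if i = j then a j else 0) from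
    Finset.sum_congr rfl fun i _ => by
      rcases eq_or_ne i j with rfl | hij
      · simp [Finsupp.single_apply]
      · simp [Finsupp.single_apply, hij]]
  simp [Finset.sum_ite_eq']

lemma Dsum_apply_Z (s : Finset (Fin n)) (a b : Fin n → ℕ) (j : Fin n) :
    (∑ i ∈ s, (Finsupp.single (Y i) (a i) + Finsupp.single (Z i) (b i))) (Z j)
      = if j ∈ s then b j else 0 := by
  classical
  rw [Finsupp.finset_sum_apply]
  rw [show (∑ i ∈ s, ((Finsupp.single (Y i) (a i) + Finsupp.single (Z i) (b i)) (Z j)))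
      = ∑ i ∈ s, (if i = j then b j else 0) from
    Finset.sum_congr rfl fun i _ => by
      rcases eq_or_ne i j with rfl | hij
      · simp [Finsupp.single_apply]
      · simp [Finsupp.single_apply, hij]]
  simp [Finset.sum_ite_eq']

lemma B1 (s : Finset (Fin n)) (c : Fin n → ℕ) (d : Idx n →₀ ℕ)
    (hd : coeff d (∏ i ∈ s, ((X (Y i) + X (Z i) : MvPolynomial (Idx n) K) ^ (c i))) ≠ 0) :
    (∀ i ∈ s, d (Y i) + d (Z i) = c i) ∧ ∀ t ∈ d.support, ∃ i ∈ s, t = Y i ∨ t = Z i := by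
  classical
  induction s using Finset.induction_on generalizing d with
  | empty =>
      simp only [Finset.prod_empty] at hd
      rw [coeff_one] at hd
      have hd0 : d = 0 := by by_contra h; exact hd (if_neg (fun he => h he.symm))
      subst hd0
      exact ⟨fun i hi => absurd hi (by simp), fun t ht => absurd ht (by simp)⟩
  | @insert j s hjs ih =>
      rw [Finset.prod_insert hjs, coeff_mul] at hd
      obtain ⟨⟨e, f⟩, hef, hne⟩ := Finset.exists_ne_zero_of_sum_ne_zero hd
      rw [Finset.HasAntidiagonal.mem_antidiagonal] at hef
      have h1 := left_ne_zero_of_mul hne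
      have h2 := right_ne_zero_of_mul hne
      obtain ⟨p, q, hpq, rfl⟩ := supp_binom_pow _ h1
      obtain ⟨ihs, ihsupp⟩ := ih f h2
      have hfY : f (Y j) = 0 := by
        by_contra h
        obtain ⟨i, his, hi⟩ := ihsupp (Y j) (Finsupp.mem_support_iff.2 h)
        rcases hi with hi | hi
        · exact hjs ((Y_inj hi) ▸ his)
        · exact Y_ne_Z j i hi
      have hfZ : f (Z j) = 0 := by
        by_contra h
        obtain ⟨i, his, hi⟩ := ihsupp (Z j) (Finsupp.mem_support_iff.2 h)
        rcases hi with hi | hi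
        · exact Y_ne_Z i j hi.symm
        · exact hjs ((Z_inj hi) ▸ his)
      subst hef
      constructor
      · intro i hi
        rcases Finset.mem_insert.1 hi with rfl | his
        · have e1 : (Finsupp.single (Y i) p + Finsupp.single (Z i) q + f) (Y i)
              = p + f (Y i) := by simp [Finsupp.single_apply]
          have e2 : (Finsupp.single (Y i) p + Finsupp.single (Z i) q + f) (Z i)
              = q + f (Z i) := by simp [Finsupp.single_apply]
          rw [e1, e2, hfY, hfZ]
          omega
        · have hij : i ≠ j := fun h => hjs (h ▸ his)
          have h1 : (Finsupp.single (Y j) p + Finsupp.single (Z j) q + f) (Y i) = f (Y i) := by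
            simp [Finsupp.single_apply, Ne.symm hij]
          have h2 : (Finsupp.single (Y j) p + Finsupp.single (Z j) q + f) (Z i) = f (Z i) := by
            simp [Finsupp.single_apply, Ne.symm hij]
          rw [h1, h2]
          exact ihs i his
      · intro t ht
        have := Finsupp.support_add ht
        rcases Finset.mem_union.1 this with h | h
        · have := Finsupp.support_add h
          rcases Finset.mem_union.1 this with h' | h'
          · exact ⟨j, Finset.mem_insert_self _ _,
              Or.inl (Finset.mem_singleton.1 (Finsupp.support_single_subset h'))⟩
          · exact ⟨j, Finset.mem_insert_self _ _,
              Or.inr (Finset.mem_singleton.1 (Finsupp.support_single_subset h'))⟩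
        · obtain ⟨i, his, hi⟩ := ihsupp t h
          exact ⟨i, Finset.mem_insert_of_mem his, hi⟩

set_option maxHeartbeats 1000000 in
lemma B2 (s : Finset (Fin n)) (a b : Fin n → ℕ) :
    coeff (∑ i ∈ s, (Finsupp.single (Y i) (a i) + Finsupp.single (Z i) (b i)))
      (∏ i ∈ s, ((X (Y i) + X (Z i) : MvPolynomial (Idx n) K) ^ (a i + b i)))
      = ∏ i ∈ s, ((a i + b i).choose (a i) : K) := by
  classical
  induction s using Finset.induction_on with
  | empty => simp [coeff_one]
  | @insert j s hjs ih =>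
      rw [Finset.sum_insert hjs, Finset.prod_insert hjs, Finset.prod_insert hjs, coeff_mul]
      rw [Finset.sum_eq_single
        ((Finsupp.single (Y j) (a j) + Finsupp.single (Z j) (b j)),
          ∑ i ∈ s, (Finsupp.single (Y i) (a i) + Finsupp.single (Z i) (b i)))]
      · rw [coeff_binom_pow (Y_ne_Z j j), ih]
      · rintro ⟨e, f⟩ hef hne'
        rw [Finset.HasAntidiagonal.mem_antidiagonal] at hef
        by_contra h
        have h1 : coeff e ((X (Y j) + X (Z j) : MvPolynomial (Idx n) K) ^ (a j + b j)) ≠ 0 :=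
          left_ne_zero_of_mul h
        have h2 := right_ne_zero_of_mul h
        obtain ⟨p, q, hpq, rfl⟩ := supp_binom_pow _ h1
        obtain ⟨_, ihsupp⟩ := B1 s (fun i => a i + b i) f h2
        have hfY : f (Y j) = 0 := by
          by_contra hcon
          obtain ⟨i, his, hi⟩ := ihsupp (Y j) (Finsupp.mem_support_iff.2 hcon)
          rcases hi with hi | hi
          · exact hjs ((Y_inj hi) ▸ his)
          · exact Y_ne_Z j i hi
        have hfZ : f (Z j) = 0 := by
          by_contra hcon
          obtain ⟨i, his, hi⟩ := ihsupp (Z j) (Finsupp.mem_support_iff.2 hcon)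
          rcases hi with hi | hi
          · exact Y_ne_Z i j hi.symm
          · exact hjs ((Z_inj hi) ▸ his)
        have hYj := DFunLike.congr_fun hef (Y j)
        have hZj := DFunLike.congr_fun hef (Z j)
        simp only [Finsupp.add_apply] at hYj hZj
        rw [Dsum_apply_Y] at hYj
        rw [Dsum_apply_Z] at hZj
        simp only [Finsupp.single_apply, if_pos rfl, Y_eq_Z', Z_eq_Y', if_false, hfY, hfZ,
          if_neg hjs, add_zero, zero_add] at hYj hZj
        have hp : p = a j := hYj
        have hq : q = b j := hZj
        subst hp; subst hq
        apply hne'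
        have hf : f = ∑ i ∈ s, (Finsupp.single (Y i) (a i) + Finsupp.single (Z i) (b i)) := by
          have := hef
          rwa [add_right_inj] at this
        rw [hf]
      · intro hnotmem
        rw [Finset.HasAntidiagonal.mem_antidiagonal] at hnotmem
        exact absurd rfl hnotmem


/-- The substitution `x_i ↦ y_i + z_i`. -/
noncomputable def σh : MvPolynomial (Fin n) K →ₐ[K] MvPolynomial (Idx n) K :=
  aeval (fun i => X (Y i) + X (Z i))

lemma σh_monomial (c : Fin n →₀ ℕ) (r : K) :
    σh (monomial c r) = C r * ∏ i : Fin n, (X (Y i) + X (Z i) : MvPolynomial (Idx n) K) ^ c i := by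
  rw [σh, aeval_monomial, Finsupp.prod_pow]
  rfl

lemma S1 (f : MvPolynomial (Fin n) K) (d : Idx n →₀ ℕ) (hd : coeff d (σh f) ≠ 0) :
    ∃ c ∈ f.support, ∀ i, d (Y i) + d (Z i) = c i := by
  classical
  rw [f.as_sum, map_sum, coeff_sum] at hd
  obtain ⟨c, hc, hne⟩ := Finset.exists_ne_zero_of_sum_ne_zero hd
  rw [σh_monomial, coeff_C_mul] at hne
  have h2 := right_ne_zero_of_mul hne
  obtain ⟨h3, _⟩ := B1 Finset.univ (fun i => c i) d h2
  exact ⟨c, hc, fun i => h3 i (Finset.mem_univ i)⟩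

lemma S2 (f : MvPolynomial (Fin n) K) (c : Fin n →₀ ℕ) (a b : Fin n → ℕ)
    (hab : ∀ i, a i + b i = c i) :
    coeff (∑ i : Fin n, (Finsupp.single (Y i) (a i) + Finsupp.single (Z i) (b i))) (σh f)
      = coeff c f * ∏ i : Fin n, ((c i).choose (a i) : K) := by
  classical
  conv_lhs => rw [f.as_sum, map_sum, coeff_sum]
  rw [Finset.sum_eq_single c]
  · rw [σh_monomial, coeff_C_mul]
    congr 1
    have hprod : ∏ i : Fin n, (X (Y i) + X (Z i) : MvPolynomial (Idx n) K) ^ c i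
        = ∏ i : Fin n, (X (Y i) + X (Z i) : MvPolynomial (Idx n) K) ^ (a i + b i) :=
      Finset.prod_congr rfl fun i _ => by rw [hab i]
    rw [hprod, B2]
    exact Finset.prod_congr rfl fun i _ => by rw [hab i]
  · intro c' _ hc'
    rw [σh_monomial, coeff_C_mul]
    rcases eq_or_ne (coeff (∑ i : Fin n, (Finsupp.single (Y i) (a i) + Finsupp.single (Z i) (b i)))
        (∏ i : Fin n, (X (Y i) + X (Z i) : MvPolynomial (Idx n) K) ^ c' i)) 0 with h0 | h0
    · rw [h0, mul_zero]
    · exfalso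
      obtain ⟨h3, _⟩ := B1 Finset.univ (fun i => c' i) _ h0
      apply hc'
      ext i
      have := h3 i (Finset.mem_univ i)
      rw [Dsum_apply_Y, Dsum_apply_Z, if_pos (Finset.mem_univ i), if_pos (Finset.mem_univ i)]
        at this
      rw [← this, hab i]
  · intro hc
    rw [notMem_support_iff.1 hc, σh_monomial, map_zero, zero_mul, coeff_zero]


variable (u v : Fin n → ℕ)

/-- Monomial generators of the ideal `M = m^u(y) + m^v(z)`. -/
def SetS : Set (Idx n →₀ ℕ) :=
  {s | (∃ i, 0 < u i ∧ s = Finsupp.single (Y i) (u i)) ∨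
    ∃ i, 0 < v i ∧ s = Finsupp.single (Z i) (v i)}

lemma map_irred (ρ : Fin n → Idx n) (w : Fin n → ℕ) :
    Ideal.map (rename ρ) (irredMonomialIdeal K w) =
      Ideal.span {p : MvPolynomial (Idx n) K | ∃ i, 0 < w i ∧ p = X (ρ i) ^ w i} := by
  rw [irredMonomialIdeal, Ideal.map_span]
  congr 1
  ext p
  constructor
  · rintro ⟨q, ⟨i, hi, rfl⟩, rfl⟩
    exact ⟨i, hi, by rw [map_pow, rename_X]⟩
  · rintro ⟨i, hi, rfl⟩
    exact ⟨X i ^ w i, ⟨i, hi, rfl⟩, by rw [map_pow, rename_X]⟩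

lemma M_eq :
    Ideal.map (rename (fun i : Fin n => (Sum.inr (Sum.inl i) : Idx n))) (irredMonomialIdeal K u) ⊔
      Ideal.map (rename (fun i : Fin n => (Sum.inr (Sum.inr i) : Idx n))) (irredMonomialIdeal K v)
    = Ideal.span ((fun s => monomial s (1 : K)) '' SetS u v) := by
  rw [map_irred, map_irred, ← Ideal.span_union]
  congr 1
  ext p
  constructor
  · rintro (⟨i, hi, rfl⟩ | ⟨i, hi, rfl⟩)
    · exact ⟨Finsupp.single (Y i) (u i), Or.inl ⟨i, hi, rfl⟩, X_pow_eq_monomial.symm⟩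
    · exact ⟨Finsupp.single (Z i) (v i), Or.inr ⟨i, hi, rfl⟩, X_pow_eq_monomial.symm⟩
  · rintro ⟨s, ⟨i, hi, rfl⟩ | ⟨i, hi, rfl⟩, rfl⟩
    · exact Or.inl ⟨i, hi, X_pow_eq_monomial.symm⟩
    · exact Or.inr ⟨i, hi, X_pow_eq_monomial.symm⟩

lemma irred_eq_span_monomial (w : Fin n → ℕ) :
    irredMonomialIdeal K w = Ideal.span ((fun s => monomial s (1 : K)) ''
      {s : Fin n →₀ ℕ | ∃ i, 0 < w i ∧ s = Finsupp.single i (w i)}) := by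
  rw [irredMonomialIdeal]
  congr 1
  ext p
  constructor
  · rintro ⟨i, hi, rfl⟩
    exact ⟨Finsupp.single i (w i), ⟨i, hi, rfl⟩, X_pow_eq_monomial.symm⟩
  · rintro ⟨s, ⟨i, hi, rfl⟩, rfl⟩
    exact ⟨i, hi, X_pow_eq_monomial.symm⟩

/-- The linear ideal `L = ⟨y_i + z_i - x_i⟩`. -/
noncomputable def Lideal : Ideal (MvPolynomial (Idx n) K) :=
  Ideal.span {p : MvPolynomial (Idx n) K | ∃ i : Fin n,
    p = X (Sum.inr (Sum.inl i)) + X (Sum.inr (Sum.inr i)) - X (Sum.inl i)}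

/-- The substitution `x_i ↦ y_i + z_i` fixing the `y` and `z` variables. -/
noncomputable def φh : MvPolynomial (Idx n) K →ₐ[K] MvPolynomial (Idx n) K :=
  aeval (Sum.elim (fun i : Fin n => X (Y i) + X (Z i)) (fun p => X (Sum.inr p)))

lemma φh_X_inl (i : Fin n) : φh (X (Sum.inl i) : MvPolynomial (Idx n) K)
    = X (Y i) + X (Z i) := by simp [φh]

lemma φh_X_inr (p : Fin n ⊕ Fin n) : φh (X (Sum.inr p) : MvPolynomial (Idx n) K)
    = X (Sum.inr p) := by simp [φh]

lemma sub_φh_mem (g : MvPolynomial (Idx n) K) : g - φh g ∈ (Lideal : Ideal (MvPolynomial (Idx n) K)) := by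
  induction g using MvPolynomial.induction_on with
  | C a =>
      simp only [MvPolynomial.algebraMap_eq, φh, aeval_C, sub_self]
      exact Ideal.zero_mem _
  | add p q hp hq =>
      have : p + q - φh (p + q) = (p - φh p) + (q - φh q) := by rw [map_add]; ring
      rw [this]; exact Ideal.add_mem _ hp hq
  | mul_X p j hp =>
      have : p * X j - φh (p * X j) = (p - φh p) * X j + φh p * (X j - φh (X j)) := by
        rw [map_mul]; ring
      rw [this]
      refine Ideal.add_mem _ (Ideal.mul_mem_right _ _ hp) (Ideal.mul_mem_left _ _ ?_)
      cases j with
      | inl i =>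
          rw [φh_X_inl]
          have hgen : (X (Sum.inr (Sum.inl i)) + X (Sum.inr (Sum.inr i)) - X (Sum.inl i) :
              MvPolynomial (Idx n) K) ∈ Lideal :=
            Ideal.subset_span ⟨i, rfl⟩
          have : (X (Sum.inl i) - (X (Y i) + X (Z i)) : MvPolynomial (Idx n) K)
              = -(X (Sum.inr (Sum.inl i)) + X (Sum.inr (Sum.inr i)) - X (Sum.inl i)) := by
            rw [Y, Z]; ring
          rw [this]
          exact neg_mem hgen
      | inr p' =>
          rw [φh_X_inr, sub_self]
          exact Ideal.zero_mem _

lemma φh_L_zero : ∀ g ∈ (Lideal : Ideal (MvPolynomial (Idx n) K)), φh g = 0 := by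
  intro g hg
  have hle : (Lideal : Ideal (MvPolynomial (Idx n) K)) ≤ RingHom.ker (φh.toRingHom (R := K)) := by
    rw [Lideal, Ideal.span_le]
    rintro p ⟨i, rfl⟩
    simp only [SetLike.mem_coe, RingHom.mem_ker, AlgHom.toRingHom_eq_coe, RingHom.coe_coe]
    rw [map_sub, map_add, φh_X_inl]
    have h1 : φh (X (Sum.inr (Sum.inl i)) : MvPolynomial (Idx n) K) = X (Y i) := φh_X_inr _
    have h2 : φh (X (Sum.inr (Sum.inr i)) : MvPolynomial (Idx n) K) = X (Z i) := φh_X_inr _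
    rw [h1, h2, Y, Z]
    ring
  exact hle hg

lemma φh_M_mem : ∀ g ∈ Ideal.span ((fun s => monomial s (1 : K)) '' SetS u v),
    φh g ∈ Ideal.span ((fun s => monomial s (1 : K)) '' SetS u v) := by
  intro g hg
  have hmap : Ideal.map (φh.toRingHom (R := K))
      (Ideal.span ((fun s => monomial s (1 : K)) '' SetS u v))
      ≤ Ideal.span ((fun s => monomial s (1 : K)) '' SetS u v) := by
    rw [Ideal.map_span, Ideal.span_le]
    rintro p ⟨q, ⟨s, hs, rfl⟩, rfl⟩
    rcases hs with ⟨i, hi, rfl⟩ | ⟨i, hi, rfl⟩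
    · have : (φh.toRingHom (R := K)) ((fun s => monomial s (1:K)) (Finsupp.single (Y i) (u i)))
          = (fun s => monomial s (1:K)) (Finsupp.single (Y i) (u i)) := by
        simp only [AlgHom.toRingHom_eq_coe, RingHom.coe_coe, ← X_pow_eq_monomial, map_pow]
        rw [show φh (X (Y i) : MvPolynomial (Idx n) K) = X (Y i) from φh_X_inr _]
      rw [this]
      exact Ideal.subset_span ⟨Finsupp.single (Y i) (u i), Or.inl ⟨i, hi, rfl⟩, rfl⟩
    · have : (φh.toRingHom (R := K)) ((fun s => monomial s (1:K)) (Finsupp.single (Z i) (v i)))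
          = (fun s => monomial s (1:K)) (Finsupp.single (Z i) (v i)) := by
        simp only [AlgHom.toRingHom_eq_coe, RingHom.coe_coe, ← X_pow_eq_monomial, map_pow]
        rw [show φh (X (Z i) : MvPolynomial (Idx n) K) = X (Z i) from φh_X_inr _]
      rw [this]
      exact Ideal.subset_span ⟨Finsupp.single (Z i) (v i), Or.inr ⟨i, hi, rfl⟩, rfl⟩
  exact hmap (Ideal.mem_map_of_mem _ hg)

lemma φh_rename (f : MvPolynomial (Fin n) K) :
    φh (rename (Sum.inl : Fin n → Idx n) f) = σh f := by
  have : (φh.comp (rename (Sum.inl : Fin n → Idx n)) :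
      MvPolynomial (Fin n) K →ₐ[K] MvPolynomial (Idx n) K) = σh := by
    apply algHom_ext
    intro i
    simp only [AlgHom.comp_apply, rename_X, σh, aeval_X]
    exact φh_X_inl i
  exact AlgHom.congr_fun this f

lemma mem_join_iff (f : MvPolynomial (Fin n) K) :
    f ∈ joinIdeal (irredMonomialIdeal K u) (irredMonomialIdeal K v) ↔
      σh f ∈ Ideal.span ((fun s => monomial s (1 : K)) '' SetS u v) := by
  rw [joinIdeal, Ideal.mem_comap, M_eq]
  set M := Ideal.span ((fun s => monomial s (1 : K)) '' SetS u v) with hM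
  rw [show (Ideal.span {p : MvPolynomial (Idx n) K | ∃ i : Fin n,
       p = X (Sum.inr (Sum.inl i)) + X (Sum.inr (Sum.inr i)) - X (Sum.inl i)}) = Lideal from rfl]
  constructor
  · intro h
    obtain ⟨m, hm, l, hl, hml⟩ := Submodule.mem_sup.1 h
    have : φh (rename (Sum.inl : Fin n → Idx n) f) = φh m + φh l := by
      rw [← map_add, hml]
    rw [φh_rename] at this
    rw [this, φh_L_zero l hl, add_zero]
    exact φh_M_mem u v m hm
  · intro h
    have hdecomp : rename (Sum.inl : Fin n → Idx n) f
        = (rename (Sum.inl : Fin n → Idx n) f - φh (rename (Sum.inl : Fin n → Idx n) f))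
          + σh f := by rw [φh_rename]; ring
    rw [hdecomp]
    exact Submodule.add_mem _
      (Submodule.mem_sup_right (sub_φh_mem _))
      (Submodule.mem_sup_left h)

end JoinProofAux

/-- in characteristic zero, `m^u * m^v = m^w` where
`w_i = u_i + v_i - 1` if `u_i > 0` and `v_i > 0`, and `w_i = 0` otherwise. -/
theorem stmt_1 (K : Type*) [Field K] [CharZero K] (n : ℕ) (u v : Fin n → ℕ) :
    joinIdeal (irredMonomialIdeal K u) (irredMonomialIdeal K v)
      = irredMonomialIdeal K (fun i => if 0 < u i ∧ 0 < v i then u i + v i - 1 else 0) := by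
  classical
  open JoinProofAux in
  ext f
  rw [JoinProofAux.mem_join_iff u v f, JoinProofAux.irred_eq_span_monomial,
    mem_ideal_span_monomial_image, mem_ideal_span_monomial_image]
  constructor
  · intro H c hc
    by_contra hcon
    push_neg at hcon
    have hcon' : ∀ i, 0 < u i → 0 < v i → c i < u i + v i - 1 := by
      intro i hui hvi
      by_contra hge
      refine hcon _ ⟨i, ?_, rfl⟩ (Finsupp.single_le_iff.2 ?_)
      · rw [if_pos ⟨hui, hvi⟩]; omega
      · rw [if_pos ⟨hui, hvi⟩]; omega
    set a : Fin n → ℕ := fun i => if u i = 0 then c i else min (c i) (u i - 1) with ha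
    set b : Fin n → ℕ := fun i => c i - a i with hb
    have hale : ∀ i, a i ≤ c i := by
      intro i
      simp only [ha]
      split_ifs with h
      · exact le_refl _
      · exact min_le_left _ _
    have hab : ∀ i, a i + b i = c i := fun i => by
      have := hale i
      simp only [hb]; omega
    have hne : coeff (∑ i : Fin n,
        (Finsupp.single (Y i) (a i) + Finsupp.single (Z i) (b i))) (σh f) ≠ 0 := by
      rw [JoinProofAux.S2 f c a b hab]
      apply mul_ne_zero
      · exact mem_support_iff.1 hc
      · refine Finset.prod_ne_zero_iff.2 fun i _ => ?_
        have hpos : 0 < (c i).choose (a i) := Nat.choose_pos (hale i)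
        exact_mod_cast hpos.ne'
    obtain ⟨s, hs, hle⟩ := H _ (mem_support_iff.2 hne)
    rcases hs with ⟨i, hi, rfl⟩ | ⟨i, hi, rfl⟩
    · have hthis := Finsupp.single_le_iff.1 hle
      rw [JoinProofAux.Dsum_apply_Y, if_pos (Finset.mem_univ i)] at hthis
      have hai : a i < u i := by
        simp only [ha]
        rw [if_neg (by omega)]
        omega
      omega
    · have hthis := Finsupp.single_le_iff.1 hle
      rw [JoinProofAux.Dsum_apply_Z, if_pos (Finset.mem_univ i)] at hthis
      rcases Nat.eq_zero_or_pos (u i) with hu0 | hu0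
      · have ha1 : a i = c i := by simp only [ha]; rw [if_pos hu0]
        have hb1 : b i = 0 := by simp only [hb]; omega
        omega
      · have hcw := hcon' i hu0 hi
        have hav : a i = if u i = 0 then c i else min (c i) (u i - 1) := by simp only [ha]
        rw [if_neg (by omega)] at hav
        have hbv : b i = c i - a i := by simp only [hb]
        rcases le_or_gt (c i) (u i - 1) with hc1 | hc1
        · have : a i = c i := by omega
          omega
        · have : a i = u i - 1 := by omega
          omega
  · intro H d hd
    obtain ⟨c, hc, hcd⟩ := JoinProofAux.S1 f d (mem_support_iff.1 hd)
    obtain ⟨s, hs, hle⟩ := H c hc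
    obtain ⟨i, hwi, rfl⟩ := hs
    have hci := Finsupp.single_le_iff.1 hle
    have hw' : 0 < u i ∧ 0 < v i := by
      by_contra h
      rw [if_neg h] at hwi
      omega
    rw [if_pos hw'] at hci
    have hdi := hcd i
    have hcase : u i ≤ d (Y i) ∨ v i ≤ d (Z i) := by
      obtain ⟨h1, h2⟩ := hw'
      omega
    rcases hcase with h | h
    · exact ⟨Finsupp.single (Y i) (u i), Or.inl ⟨i, hw'.1, rfl⟩, Finsupp.single_le_iff.2 h⟩
    · exact ⟨Finsupp.single (Z i) (v i), Or.inr ⟨i, hw'.2, rfl⟩, Finsupp.single_le_iff.2 h⟩
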